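/- Let A : ℝ^{n₁×n₂} → ℝ^m be a linear map with adjoint A*, b ∈ ℝ^m, and suppose the step sizes satisfy 0 < inf_k δ_k ≤ sup_k δ_k < 2/‖A‖₂², where ‖A‖₂ := sup{‖A(X)‖ : ‖X‖_F = 1}. Then the sequence {X^k} defined by X^k = D_τ(A*(y^{k−1})), y^k = y^{k−1} + δ_k (b − A(X^k)), started from y⁰ = 0, converges to the unique solution of: minimize τ‖X‖_* + (1/2)‖X‖_F² subject to A(X) = b. -/

import Mathlib

open Matrix Filter Topology

noncomputable def frob {n₁ n₂ : ℕ} (X : Matrix (Fin n₁) (Fin n₂) ℝ) : ℝ :=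
  Real.sqrt (∑ i, ∑ j, (X i j) ^ 2)

noncomputable def mInner {n₁ n₂ : ℕ} (X Y : Matrix (Fin n₁) (Fin n₂) ℝ) : ℝ :=
  ∑ i, ∑ j, X i j * Y i j

noncomputable def singVal {n₁ n₂ : ℕ} (X : Matrix (Fin n₁) (Fin n₂) ℝ) (j : Fin n₂) : ℝ :=
  Real.sqrt ((Matrix.isHermitian_conjTranspose_mul_self X).eigenvalues j)

noncomputable def nuclearNorm {n₁ n₂ : ℕ} (X : Matrix (Fin n₁) (Fin n₂) ℝ) : ℝ :=
  ∑ j, singVal X j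

noncomputable def specNorm {n₁ n₂ : ℕ} (X : Matrix (Fin n₁) (Fin n₂) ℝ) : ℝ :=
  ⨆ j, singVal X j

noncomputable def ftau {n₁ n₂ : ℕ} (τ : ℝ) (X : Matrix (Fin n₁) (Fin n₂) ℝ) : ℝ :=
  τ * nuclearNorm X + (1 / 2) * frob X ^ 2

def projSet {n₁ n₂ : ℕ} (Ω : Finset (Fin n₁ × Fin n₂)) (X : Matrix (Fin n₁) (Fin n₂) ℝ) :
    Matrix (Fin n₁) (Fin n₂) ℝ :=
  Matrix.of fun i j => if (i, j) ∈ Ω then X i j else 0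

def IsSubgradAt {n₁ n₂ : ℕ} (f : Matrix (Fin n₁) (Fin n₂) ℝ → ℝ)
    (Z X₀ : Matrix (Fin n₁) (Fin n₂) ℝ) : Prop :=
  ∀ X, f X₀ + mInner Z (X - X₀) ≤ f X

noncomputable def eNorm {m : ℕ} (v : Fin m → ℝ) : ℝ := Real.sqrt (∑ i, v i ^ 2)

noncomputable def eInner {m : ℕ} (v w : Fin m → ℝ) : ℝ := ∑ i, v i * w i
section Aux
open Matrix Finset

variable {n₁ n₂ m : ℕ}

lemma frob_sq (X : Matrix (Fin n₁) (Fin n₂) ℝ) :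
    frob X ^ 2 = ∑ i, ∑ j, (X i j)^2 :=
  Real.sq_sqrt (by positivity)

lemma frob_nonneg (X : Matrix (Fin n₁) (Fin n₂) ℝ) : 0 ≤ frob X := Real.sqrt_nonneg _

lemma frob_sq_nonneg (X : Matrix (Fin n₁) (Fin n₂) ℝ) : 0 ≤ frob X ^ 2 := sq_nonneg _

lemma eq_zero_of_frob_sq (X : Matrix (Fin n₁) (Fin n₂) ℝ) (h : frob X ^ 2 ≤ 0) : X = 0 := by
  rw [frob_sq] at h
  have h2 : ∑ i, ∑ j, (X i j)^2 = 0 := le_antisymm h (by positivity)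
  ext i j
  have hi := (Finset.sum_eq_zero_iff_of_nonneg (fun i _ => by positivity)).mp h2 i (mem_univ i)
  have hj := (Finset.sum_eq_zero_iff_of_nonneg (fun j _ => sq_nonneg _)).mp hi j (mem_univ j)
  simpa using pow_eq_zero_iff (n := 2) (by norm_num) |>.mp hj

lemma mInner_self (X : Matrix (Fin n₁) (Fin n₂) ℝ) : mInner X X = frob X ^ 2 := by
  rw [frob_sq]; simp [mInner, pow_two]

lemma mInner_comm (X Y : Matrix (Fin n₁) (Fin n₂) ℝ) : mInner X Y = mInner Y X := by
  simp [mInner, mul_comm]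

lemma mInner_add_left (X Y Z : Matrix (Fin n₁) (Fin n₂) ℝ) :
    mInner (X + Y) Z = mInner X Z + mInner Y Z := by
  simp [mInner, add_mul, Finset.sum_add_distrib]

lemma mInner_sub_left (X Y Z : Matrix (Fin n₁) (Fin n₂) ℝ) :
    mInner (X - Y) Z = mInner X Z - mInner Y Z := by
  simp [mInner, sub_mul, Finset.sum_sub_distrib]

lemma mInner_sub_right (X Y Z : Matrix (Fin n₁) (Fin n₂) ℝ) :
    mInner X (Y - Z) = mInner X Y - mInner X Z := by
  simp [mInner, mul_sub, Finset.sum_sub_distrib]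

lemma mInner_smul_left (c : ℝ) (X Y : Matrix (Fin n₁) (Fin n₂) ℝ) :
    mInner (c • X) Y = c * mInner X Y := by
  simp [mInner, Finset.mul_sum, mul_assoc]

lemma mInner_smul_right (c : ℝ) (X Y : Matrix (Fin n₁) (Fin n₂) ℝ) :
    mInner X (c • Y) = c * mInner X Y := by
  rw [mInner_comm, mInner_smul_left, mInner_comm]

lemma mInner_zero_right (X Y : Matrix (Fin n₁) (Fin n₂) ℝ) :
    mInner X (Y - Y) = 0 := by
  rw [mInner_sub_right]; ring

lemma mInner_add_right (X Y Z : Matrix (Fin n₁) (Fin n₂) ℝ) :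
    mInner X (Y + Z) = mInner X Y + mInner X Z := by
  simp [mInner, mul_add, Finset.sum_add_distrib]

lemma frob_sq_add_smul (U D : Matrix (Fin n₁) (Fin n₂) ℝ) (c : ℝ) :
    frob (U + c • D) ^ 2 = frob U ^ 2 + 2*c*(mInner U D) + c^2 * frob D ^ 2 := by
  rw [← mInner_self, ← mInner_self, ← mInner_self]
  simp only [mInner_add_left, mInner_add_right, mInner_smul_left, mInner_smul_right,
    mInner_comm D U]
  ring

lemma frob_sq_sub (Z W : Matrix (Fin n₁) (Fin n₂) ℝ) :
    frob (Z - W) ^ 2 = frob Z ^ 2 - 2 * mInner W Z + frob W ^ 2 := by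
  have h : Z - W = Z + (-1 : ℝ) • W := by
    ext i j; simp [Matrix.sub_apply, Matrix.add_apply, Matrix.smul_apply]; ring
  rw [h, frob_sq_add_smul, mInner_comm]; ring

lemma eNorm_sq (v : Fin m → ℝ) : eNorm v ^ 2 = v ⬝ᵥ v := by
  rw [eNorm, Real.sq_sqrt (by positivity)]; simp [dotProduct, pow_two]

lemma eNorm_nonneg (v : Fin m → ℝ) : 0 ≤ eNorm v := Real.sqrt_nonneg _

lemma dot_self_nonneg (v : Fin m → ℝ) : 0 ≤ v ⬝ᵥ v := by
  rw [← eNorm_sq]; positivity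

lemma eq_zero_of_dot_self (v : Fin m → ℝ) (h : v ⬝ᵥ v ≤ 0) : v = 0 := by
  have h2 : ∑ i, v i * v i = 0 := le_antisymm h (by rw [show ∑ i, v i * v i = v ⬝ᵥ v from rfl]; exact dot_self_nonneg v)
  ext i
  have := (Finset.sum_eq_zero_iff_of_nonneg (fun i _ => mul_self_nonneg (v i))).mp h2 i (mem_univ i)
  exact (mul_self_eq_zero).mp this

lemma eNorm_smul (c : ℝ) (v : Fin m → ℝ) : eNorm (c • v) = |c| * eNorm v := by
  rw [eNorm, eNorm]
  have : ∑ i, (c • v) i ^ 2 = c^2 * ∑ i, v i ^ 2 := by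
    simp [Finset.mul_sum, mul_pow]
  rw [this, Real.sqrt_mul (sq_nonneg c), Real.sqrt_sq_eq_abs]

lemma frob_smul (c : ℝ) (X : Matrix (Fin n₁) (Fin n₂) ℝ) : frob (c • X) = |c| * frob X := by
  rw [frob, frob]
  have : ∑ i, ∑ j, (c • X) i j ^ 2 = c^2 * ∑ i, ∑ j, X i j ^ 2 := by
    simp [Finset.mul_sum, mul_pow]
  rw [this, Real.sqrt_mul (sq_nonneg c), Real.sqrt_sq_eq_abs]

lemma abs_entry_le_frob (X : Matrix (Fin n₁) (Fin n₂) ℝ) (p : Fin n₁) (q : Fin n₂) :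
    |X p q| ≤ frob X := by
  rw [frob, ← Real.sqrt_sq_eq_abs]
  apply Real.sqrt_le_sqrt
  calc X p q ^ 2 ≤ ∑ j, X p j ^ 2 :=
        Finset.single_le_sum (f := fun j => X p j ^ 2) (fun j _ => sq_nonneg _) (mem_univ q)
    _ ≤ ∑ i, ∑ j, X i j ^ 2 :=
        Finset.single_le_sum (f := fun i => ∑ j, X i j ^ 2)
          (fun i _ => by positivity) (mem_univ p)

lemma entry_sq_le_frob_sq (X : Matrix (Fin n₁) (Fin n₂) ℝ) (p : Fin n₁) (q : Fin n₂) :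
    (X p q) ^ 2 ≤ frob X ^ 2 := by
  rw [frob_sq]
  calc X p q ^ 2 ≤ ∑ j, X p j ^ 2 :=
        Finset.single_le_sum (f := fun j => X p j ^ 2) (fun j _ => sq_nonneg _) (mem_univ q)
    _ ≤ ∑ i, ∑ j, X i j ^ 2 :=
        Finset.single_le_sum (f := fun i => ∑ j, X i j ^ 2)
          (fun i _ => by positivity) (mem_univ p)

end Aux
section Spectral
open Matrix Finset

variable {n₁ n₂ : ℕ}

lemma dot_sum_right {n : ℕ} {ι : Type*} (S : Finset ι) (x : Fin n → ℝ) (f : ι → Fin n → ℝ) :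
    x ⬝ᵥ (∑ j ∈ S, f j) = ∑ j ∈ S, x ⬝ᵥ f j := by
  simp [dotProduct, Finset.mul_sum, Finset.sum_comm (s := S)]

lemma bessel {ι : Type*} [DecidableEq ι] {n : ℕ} (S : Finset ι) (w : ι → Fin n → ℝ)
    (hw : ∀ j ∈ S, ∀ j' ∈ S, w j ⬝ᵥ w j' = if j = j' then 1 else 0)
    (x : Fin n → ℝ) : ∑ j ∈ S, (w j ⬝ᵥ x)^2 ≤ x ⬝ᵥ x := by
  classical
  set r := x - ∑ j ∈ S, (w j ⬝ᵥ x) • w j with hr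
  have h0 : 0 ≤ r ⬝ᵥ r := by
    rw [show r ⬝ᵥ r = ∑ i, r i * r i from rfl]
    exact Finset.sum_nonneg fun i _ => mul_self_nonneg _
  have hxs : x ⬝ᵥ (∑ j ∈ S, (w j ⬝ᵥ x) • w j) = ∑ j ∈ S, (w j ⬝ᵥ x)^2 := by
    rw [dot_sum_right]
    refine Finset.sum_congr rfl fun j hj => ?_
    rw [dotProduct_smul, dotProduct_comm, smul_eq_mul, sq]
  have hinner : ∀ j ∈ S, w j ⬝ᵥ (∑ j' ∈ S, (w j' ⬝ᵥ x) • w j') = w j ⬝ᵥ x := by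
    intro j hj
    rw [dot_sum_right]
    have hterm : ∀ j' ∈ S, w j ⬝ᵥ ((w j' ⬝ᵥ x) • w j')
        = if j = j' then w j' ⬝ᵥ x else 0 := by
      intro j' hj'
      rw [dotProduct_smul, hw j hj j' hj']
      split <;> simp
    rw [Finset.sum_congr rfl hterm, Finset.sum_ite_eq S j (fun j' => w j' ⬝ᵥ x), if_pos hj]
  have hss : (∑ j ∈ S, (w j ⬝ᵥ x) • w j) ⬝ᵥ (∑ j ∈ S, (w j ⬝ᵥ x) • w j)
      = ∑ j ∈ S, (w j ⬝ᵥ x)^2 := by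
    rw [dot_sum_right]
    refine Finset.sum_congr rfl fun j hj => ?_
    rw [dotProduct_smul, dotProduct_comm (∑ j ∈ S, (w j ⬝ᵥ x) • w j) (w j), hinner j hj,
      smul_eq_mul, sq, dotProduct_comm]
  have hrr : r ⬝ᵥ r = x ⬝ᵥ x - ∑ j ∈ S, (w j ⬝ᵥ x)^2 := by
    rw [hr, sub_dotProduct, dotProduct_sub, dotProduct_sub, hxs, hss]
    have : (∑ j ∈ S, (w j ⬝ᵥ x) • w j) ⬝ᵥ x = ∑ j ∈ S, (w j ⬝ᵥ x)^2 := by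
      rw [dotProduct_comm, hxs]
    rw [this]; ring
  linarith
end Spectral
section Trace
open Matrix Finset

lemma dot_mulVec_mulVec {n₁ n₂ : ℕ} (X : Matrix (Fin n₁) (Fin n₂) ℝ) (v w : Fin n₂ → ℝ) :
    (X *ᵥ v) ⬝ᵥ (X *ᵥ w) = v ⬝ᵥ ((Xᴴ * X) *ᵥ w) := by
  rw [Matrix.conjTranspose_eq_transpose_of_trivial, ← Matrix.mulVec_mulVec,
    Matrix.dotProduct_mulVec v, Matrix.vecMul_transpose]

lemma eigenbasis_dot {n : ℕ} (A : Matrix (Fin n) (Fin n) ℝ) (hA : A.IsHermitian) (i j : Fin n) :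
    (⇑(hA.eigenvectorBasis i) ⬝ᵥ ⇑(hA.eigenvectorBasis j)) = if i = j then 1 else 0 := by
  have h := hA.eigenvectorBasis.orthonormal
  rw [orthonormal_iff_ite] at h
  simpa [PiLp.inner_apply, RCLike.inner_apply, conj_trivial, dotProduct, mul_comm] using h i j

lemma eigenbasis_expand {n : ℕ} (A : Matrix (Fin n) (Fin n) ℝ) (hA : A.IsHermitian)
    (x : Fin n → ℝ) :
    ∑ i, (⇑(hA.eigenvectorBasis i) ⬝ᵥ x) • ⇑(hA.eigenvectorBasis i) = x := by
  have := congrArg (WithLp.ofLp (p := 2)) (hA.eigenvectorBasis.sum_repr' (WithLp.toLp 2 x))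
  simp only [WithLp.ofLp_sum, WithLp.ofLp_smul, WithLp.ofLp_toLp] at this
  convert this using 2 with i
  simp [PiLp.inner_apply, dotProduct, mul_comm]

/-- von Neumann type trace bound: for orthonormal families `u`, `v` indexed by `S`,
`∑ j in S, ⟨u j, X (v j)⟩ ≤ ‖X‖_*`. -/
lemma trace_bound {n₁ n₂ : ℕ} (X : Matrix (Fin n₁) (Fin n₂) ℝ)
    {ι : Type*} [DecidableEq ι] (S : Finset ι) (u : ι → Fin n₁ → ℝ) (v : ι → Fin n₂ → ℝ)
    (hu : ∀ j ∈ S, ∀ j' ∈ S, u j ⬝ᵥ u j' = if j = j' then 1 else 0)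
    (hv : ∀ j ∈ S, ∀ j' ∈ S, v j ⬝ᵥ v j' = if j = j' then 1 else 0) :
    ∑ j ∈ S, u j ⬝ᵥ (X *ᵥ v j) ≤ nuclearNorm X := by
  classical
  set hH := Matrix.isHermitian_conjTranspose_mul_self X with hHdef
  set q : Fin n₂ → Fin n₂ → ℝ := fun i => ⇑(hH.eigenvectorBasis i) with hq
  set lam : Fin n₂ → ℝ := hH.eigenvalues with hlamdef
  have hlam : ∀ i, 0 ≤ lam i := fun i => Matrix.eigenvalues_conjTranspose_mul_self_nonneg X i
  have hq_on : ∀ i i', q i ⬝ᵥ q i' = if i = i' then 1 else 0 := fun i i' =>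
    eigenbasis_dot _ hH i i'
  have hHq : ∀ i, (Xᴴ * X) *ᵥ q i = lam i • q i := fun i => hH.mulVec_eigenvectorBasis i
  have hXqXq : ∀ i i', (X *ᵥ q i) ⬝ᵥ (X *ᵥ q i') = if i = i' then lam i' else 0 := by
    intro i i'
    rw [dot_mulVec_mulVec, hHq, dotProduct_smul, hq_on, smul_eq_mul]
    split <;> simp
  have hsig : ∀ i, singVal X i ^ 2 = lam i := fun i => Real.sq_sqrt (hlam i)
  have hsig0 : ∀ i, 0 ≤ singVal X i := fun i => Real.sqrt_nonneg _
  set p : Fin n₂ → Fin n₁ → ℝ := fun i => (singVal X i)⁻¹ • (X *ᵥ q i) with hp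
  have hXq0 : ∀ i, lam i = 0 → X *ᵥ q i = 0 := by
    intro i h
    apply eq_zero_of_dot_self
    rw [hXqXq i i, if_pos rfl, h]
  have hXqp : ∀ i, X *ᵥ q i = singVal X i • p i := by
    intro i
    by_cases h : lam i = 0
    · rw [hXq0 i h, hp]; simp [hXq0 i h]
    · have hσ : singVal X i ≠ 0 := by
        intro hc; apply h; rw [← hsig i, hc]; ring
      rw [hp]; simp only
      rw [smul_inv_smul₀ hσ]
  have hpp : ∀ i, p i ⬝ᵥ p i ≤ 1 := by
    intro i
    by_cases h : lam i = 0
    · rw [hp]; simp only [hXq0 i h, smul_zero]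
      simp
    · have hσ : singVal X i ≠ 0 := by
        intro hc; apply h; rw [← hsig i, hc]; ring
      rw [hp]; simp only [smul_dotProduct, dotProduct_smul, hXqXq i i, if_pos rfl, smul_eq_mul]
      rw [← hsig i]
      field_simp
      rw [if_pos trivial, div_self (pow_ne_zero 2 hσ)]
  have hexp : ∀ yv : Fin n₂ → ℝ, X *ᵥ yv = ∑ i, (q i ⬝ᵥ yv) • (singVal X i • p i) := by
    intro yv
    conv_lhs => rw [← eigenbasis_expand _ hH yv]
    rw [show (∑ i, (q i ⬝ᵥ yv) • q i) = ∑ i, (q i ⬝ᵥ yv) • q i from rfl]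
    rw [← Matrix.mulVecLin_apply, map_sum]
    refine Finset.sum_congr rfl fun i _ => ?_
    rw [_root_.map_smul, Matrix.mulVecLin_apply, hXqp i]
  calc ∑ j ∈ S, u j ⬝ᵥ (X *ᵥ v j)
      = ∑ j ∈ S, ∑ i, singVal X i * ((q i ⬝ᵥ v j) * (u j ⬝ᵥ p i)) := by
        refine Finset.sum_congr rfl fun j _ => ?_
        rw [hexp (v j), dot_sum_right]
        refine Finset.sum_congr rfl fun i _ => ?_
        rw [dotProduct_smul, dotProduct_smul, smul_eq_mul, smul_eq_mul]; ring
    _ = ∑ i, ∑ j ∈ S, singVal X i * ((q i ⬝ᵥ v j) * (u j ⬝ᵥ p i)) := Finset.sum_comm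
    _ ≤ ∑ i, singVal X i := by
        refine Finset.sum_le_sum fun i _ => ?_
        rw [← Finset.mul_sum]
        have hb1 : ∑ j ∈ S, (v j ⬝ᵥ q i)^2 ≤ 1 := by
          have := bessel S v hv (q i)
          rw [hq_on i i, if_pos rfl] at this; exact this
        have hb2 : ∑ j ∈ S, (u j ⬝ᵥ p i)^2 ≤ 1 := le_trans (bessel S u hu (p i)) (hpp i)
        have hmain : ∑ j ∈ S, (q i ⬝ᵥ v j) * (u j ⬝ᵥ p i) ≤ 1 := by
          have h1 : ∑ j ∈ S, (q i ⬝ᵥ v j) * (u j ⬝ᵥ p i)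
              ≤ ∑ j ∈ S, ((q i ⬝ᵥ v j)^2 + (u j ⬝ᵥ p i)^2)/2 :=
            Finset.sum_le_sum fun j _ => by nlinarith [sq_nonneg ((q i ⬝ᵥ v j) - (u j ⬝ᵥ p i))]
          have h2 : ∑ j ∈ S, ((q i ⬝ᵥ v j)^2 + (u j ⬝ᵥ p i)^2)/2
              = ((∑ j ∈ S, (q i ⬝ᵥ v j)^2) + ∑ j ∈ S, (u j ⬝ᵥ p i)^2)/2 := by
            rw [← Finset.sum_add_distrib, ← Finset.sum_div]
          have h3 : ∑ j ∈ S, (q i ⬝ᵥ v j)^2 = ∑ j ∈ S, (v j ⬝ᵥ q i)^2 := by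
            refine Finset.sum_congr rfl fun j _ => by rw [dotProduct_comm]
          linarith
        calc singVal X i * ∑ j ∈ S, (q i ⬝ᵥ v j) * (u j ⬝ᵥ p i)
            ≤ singVal X i * 1 := mul_le_mul_of_nonneg_left hmain (hsig0 i)
          _ = singVal X i := mul_one _
    _ = nuclearNorm X := rfl

end Trace
section Convexity
open Matrix Finset

/-- Convex-combination (actually subadditivity with nonneg weights) bound for nuclearNorm. -/
lemma nuclear_convex {n₁ n₂ : ℕ} (M Y Z : Matrix (Fin n₁) (Fin n₂) ℝ) (a t : ℝ)
    (ha : 0 ≤ a) (ht : 0 ≤ t) (hM : M = a • Y + t • Z) :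
    nuclearNorm M ≤ a * nuclearNorm Y + t * nuclearNorm Z := by
  classical
  set hH := Matrix.isHermitian_conjTranspose_mul_self M with hHdef
  set q : Fin n₂ → Fin n₂ → ℝ := fun i => ⇑(hH.eigenvectorBasis i) with hq
  set lam : Fin n₂ → ℝ := hH.eigenvalues with hlamdef
  have hlam : ∀ i, 0 ≤ lam i := fun i => Matrix.eigenvalues_conjTranspose_mul_self_nonneg M i
  have hq_on : ∀ i i', q i ⬝ᵥ q i' = if i = i' then 1 else 0 := fun i i' =>
    eigenbasis_dot _ hH i i'
  have hHq : ∀ i, (Mᴴ * M) *ᵥ q i = lam i • q i := fun i => hH.mulVec_eigenvectorBasis i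
  have hXqXq : ∀ i i', (M *ᵥ q i) ⬝ᵥ (M *ᵥ q i') = if i = i' then lam i' else 0 := by
    intro i i'
    rw [dot_mulVec_mulVec, hHq, dotProduct_smul, hq_on, smul_eq_mul]
    split <;> simp
  have hsig : ∀ i, singVal M i ^ 2 = lam i := fun i => Real.sq_sqrt (hlam i)
  have hsig0 : ∀ i, 0 ≤ singVal M i := fun i => Real.sqrt_nonneg _
  set S : Finset (Fin n₂) := Finset.univ.filter (fun i => lam i ≠ 0) with hS
  set u : Fin n₂ → Fin n₁ → ℝ := fun i => (singVal M i)⁻¹ • (M *ᵥ q i) with hu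
  have hσ_ne : ∀ i ∈ S, singVal M i ≠ 0 := by
    intro i hi hc
    have : lam i ≠ 0 := (Finset.mem_filter.mp hi).2
    apply this; rw [← hsig i, hc]; ring
  have hu_on : ∀ i ∈ S, ∀ i' ∈ S, u i ⬝ᵥ u i' = if i = i' then 1 else 0 := by
    intro i hi i' hi'
    rw [hu]; simp only [smul_dotProduct, dotProduct_smul, hXqXq i i', smul_eq_mul]
    by_cases h : i = i'
    · subst h
      rw [if_pos rfl, if_pos rfl, ← hsig i]
      field_simp
      rw [div_self (hσ_ne i hi)]
    · rw [if_neg h, if_neg h]; ring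
  have hq_onS : ∀ i ∈ S, ∀ i' ∈ S, q i ⬝ᵥ q i' = if i = i' then 1 else 0 := by
    intro i _ i' _; exact hq_on i i'
  have hσl : ∀ i, singVal M i = Real.sqrt (lam i) := fun _ => rfl
  have hNM : nuclearNorm M = ∑ i ∈ S, u i ⬝ᵥ (M *ᵥ q i) := by
    rw [nuclearNorm, ← Finset.sum_subset (Finset.subset_univ S) (fun i _ hi => by
      have hl : lam i = 0 := by
        by_contra hne
        exact hi (Finset.mem_filter.mpr ⟨Finset.mem_univ i, hne⟩)
      rw [hσl i, hl, Real.sqrt_zero])]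
    refine Finset.sum_congr rfl fun i hi => ?_
    rw [hu]; simp only [smul_dotProduct, smul_eq_mul, hXqXq i i, if_pos rfl]
    rw [← hsig i]
    field_simp
    rw [if_pos trivial, pow_two, mul_div_assoc, div_self (hσ_ne i hi), mul_one]
  have hsplit : ∀ i, M *ᵥ q i = a • (Y *ᵥ q i) + t • (Z *ᵥ q i) := by
    intro i
    rw [hM, Matrix.add_mulVec, Matrix.smul_mulVec, Matrix.smul_mulVec]
  calc nuclearNorm M = ∑ i ∈ S, u i ⬝ᵥ (M *ᵥ q i) := hNM
    _ = a * (∑ i ∈ S, u i ⬝ᵥ (Y *ᵥ q i)) + t * (∑ i ∈ S, u i ⬝ᵥ (Z *ᵥ q i)) := by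
        rw [Finset.mul_sum, Finset.mul_sum, ← Finset.sum_add_distrib]
        refine Finset.sum_congr rfl fun i _ => ?_
        rw [hsplit i, dotProduct_add, dotProduct_smul, dotProduct_smul, smul_eq_mul, smul_eq_mul]
    _ ≤ a * nuclearNorm Y + t * nuclearNorm Z := by
        have h1 := trace_bound Y S u q hu_on hq_onS
        have h2 := trace_bound Z S u q hu_on hq_onS
        have := mul_le_mul_of_nonneg_left h1 ha
        have := mul_le_mul_of_nonneg_left h2 ht
        linarith

end Convexity
section Prox
open Matrix

/-- One-sided optimality inequality from minimality of the prox objective. -/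
lemma prox_subgrad {n₁ n₂ : ℕ} (τ : ℝ) (hτ : 0 ≤ τ) (W P Q : Matrix (Fin n₁) (Fin n₂) ℝ)
    (hmin : ∀ Z, τ * nuclearNorm P + (1/2) * frob (P - W)^2
      ≤ τ * nuclearNorm Z + (1/2) * frob (Z - W)^2) :
    0 ≤ τ * (nuclearNorm Q - nuclearNorm P) + mInner (P - W) (Q - P) := by
  set B := frob (Q - P) ^ 2 with hB
  have hBnn : 0 ≤ B := sq_nonneg _
  set C := τ * (nuclearNorm Q - nuclearNorm P) + mInner (P - W) (Q - P) with hCdef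
  have hkey : ∀ t : ℝ, 0 < t → t ≤ 1 → 0 ≤ C + t/2 * B := by
    intro t ht ht1
    have hmin' := hmin (P + t • (Q - P))
    have hN : nuclearNorm (P + t • (Q - P))
        ≤ (1 - t) * nuclearNorm P + t * nuclearNorm Q := by
      apply nuclear_convex _ P Q (1 - t) t (by linarith) (le_of_lt ht)
      ext i j
      simp only [Matrix.add_apply, Matrix.smul_apply, Matrix.sub_apply, smul_eq_mul]
      ring
    have hfr : frob (P + t • (Q - P) - W) ^ 2
        = frob (P - W)^2 + 2*t*(mInner (P - W) (Q - P)) + t^2 * B := by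
      have he : P + t • (Q - P) - W = (P - W) + t • (Q - P) := by
        ext i j
        simp only [Matrix.add_apply, Matrix.smul_apply, Matrix.sub_apply, smul_eq_mul]
        ring
      rw [he, frob_sq_add_smul, hB]
    rw [hfr] at hmin'
    have hτN := mul_le_mul_of_nonneg_left hN hτ
    have h2 : 0 ≤ t * (C + t/2 * B) := by nlinarith [hmin', hτN]
    exact nonneg_of_mul_nonneg_right h2 ht
  by_contra hC
  push_neg at hC
  set t := min 1 (-C / (B + 1)) with htdef
  have ht0 : 0 < t := lt_min one_pos (div_pos (by linarith) (by linarith))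
  have ht1 : t ≤ 1 := min_le_left _ _
  have ht2 : t ≤ -C / (B + 1) := min_le_right _ _
  have hk := hkey t ht0 ht1
  have h3 : t * B ≤ (-C/(B+1)) * B := mul_le_mul_of_nonneg_right ht2 hBnn
  have h4 : (-C/(B+1)) * B ≤ -C := by
    rw [div_mul_eq_mul_div, div_le_iff₀ (by linarith : (0:ℝ) < B + 1)]
    nlinarith
  linarith

/-- Firm monotonicity of the prox operator. -/
lemma prox_mono {n₁ n₂ : ℕ} (τ : ℝ) (hτ : 0 ≤ τ) (W₁ W₂ P₁ P₂ : Matrix (Fin n₁) (Fin n₂) ℝ)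
    (h₁ : ∀ Z, τ * nuclearNorm P₁ + (1/2) * frob (P₁ - W₁)^2
      ≤ τ * nuclearNorm Z + (1/2) * frob (Z - W₁)^2)
    (h₂ : ∀ Z, τ * nuclearNorm P₂ + (1/2) * frob (P₂ - W₂)^2
      ≤ τ * nuclearNorm Z + (1/2) * frob (Z - W₂)^2) :
    frob (P₁ - P₂) ^ 2 ≤ mInner (P₁ - P₂) (W₁ - W₂) := by
  have ha := prox_subgrad τ hτ W₁ P₁ P₂ h₁
  have hb := prox_subgrad τ hτ W₂ P₂ P₁ h₂
  have hsum : 0 ≤ mInner (P₁ - W₁) (P₂ - P₁) + mInner (P₂ - W₂) (P₁ - P₂) := by linarith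
  have hrw : mInner (P₁ - W₁) (P₂ - P₁) + mInner (P₂ - W₂) (P₁ - P₂)
      = mInner (P₁ - P₂) (W₁ - W₂) - mInner (P₁ - P₂) (P₁ - P₂) := by
    simp only [mInner_sub_left, mInner_sub_right]
    have c1 := mInner_comm P₁ P₂
    have c2 := mInner_comm W₁ P₂
    have c3 := mInner_comm W₁ P₁
    have c4 := mInner_comm W₂ P₂
    have c5 := mInner_comm W₂ P₁
    linarith
  rw [hrw] at hsum
  rw [← mInner_self]
  linarith
end Prox
section OpNorm
open Matrix Finset

lemma eNorm_eq_norm {m : ℕ} (v : Fin m → ℝ) :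
    eNorm v = ‖(WithLp.equiv 2 (Fin m → ℝ)).symm v‖ := by
  rw [eNorm, EuclideanSpace.norm_eq]
  congr 1
  refine Finset.sum_congr rfl fun i _ => ?_
  rw [Real.norm_eq_abs, sq_abs]
  rfl

lemma eNorm_add_le {m : ℕ} (v w : Fin m → ℝ) : eNorm (v + w) ≤ eNorm v + eNorm w := by
  rw [eNorm_eq_norm, eNorm_eq_norm, eNorm_eq_norm]
  exact norm_add_le ((WithLp.equiv 2 (Fin m → ℝ)).symm v) ((WithLp.equiv 2 (Fin m → ℝ)).symm w)

lemma eNorm_sum_le {m : ℕ} {ι : Type*} (s : Finset ι) (f : ι → Fin m → ℝ) :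
    eNorm (∑ j ∈ s, f j) ≤ ∑ j ∈ s, eNorm (f j) := by
  classical
  induction s using Finset.induction with
  | empty => simp [eNorm]
  | insert _ _ hx ih =>
    rw [Finset.sum_insert hx, Finset.sum_insert hx]
    exact le_trans (eNorm_add_le _ _) (by linarith)

lemma op_bound {n₁ n₂ m : ℕ} (A : Matrix (Fin n₁) (Fin n₂) ℝ →ₗ[ℝ] (Fin m → ℝ)) :
    ∃ nA : ℝ, 0 ≤ nA ∧ nA = sSup {c : ℝ | ∃ X, frob X = 1 ∧ c = eNorm (A X)} ∧
      ∀ X, eNorm (A X) ≤ nA * frob X := by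
  classical
  set s := {c : ℝ | ∃ X : Matrix (Fin n₁) (Fin n₂) ℝ, frob X = 1 ∧ c = eNorm (A X)} with hs
  set C : ℝ := ∑ p, ∑ q, eNorm (A (Matrix.single p q 1)) with hC
  have hbdd : ∀ X : Matrix (Fin n₁) (Fin n₂) ℝ, eNorm (A X) ≤ C * frob X := by
    intro X
    have hX : X = ∑ p, ∑ q, X p q • Matrix.single p q 1 := by
      have h0 := Matrix.matrix_eq_sum_single X
      have hsb : ∀ (p : Fin n₁) (q : Fin n₂),
          Matrix.single p q (X p q) = X p q • Matrix.single p q 1 := by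
        intro p q
        ext a c
        simp [Matrix.single, Matrix.smul_apply, mul_ite]
      conv_lhs => rw [h0]
      exact Finset.sum_congr rfl fun p _ => Finset.sum_congr rfl fun q _ => hsb p q
    have : eNorm (A X) ≤ ∑ p, ∑ q, |X p q| * eNorm (A (Matrix.single p q 1)) := by
      conv_lhs => rw [hX]
      rw [map_sum]
      refine le_trans (eNorm_sum_le _ _) (Finset.sum_le_sum fun p _ => ?_)
      rw [map_sum]
      refine le_trans (eNorm_sum_le _ _) (Finset.sum_le_sum fun q _ => ?_)
      rw [_root_.map_smul, eNorm_smul]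
    refine le_trans this ?_
    rw [Finset.sum_mul]
    refine Finset.sum_le_sum fun p _ => ?_
    rw [Finset.sum_mul]
    refine Finset.sum_le_sum fun q _ => ?_
    calc |X p q| * eNorm (A (Matrix.single p q 1))
        ≤ frob X * eNorm (A (Matrix.single p q 1)) :=
          mul_le_mul_of_nonneg_right (abs_entry_le_frob X p q) (eNorm_nonneg _)
      _ = eNorm (A (Matrix.single p q 1)) * frob X := mul_comm _ _
  have hBddAbove : BddAbove s := by
    refine ⟨C, fun c hc => ?_⟩
    obtain ⟨X, hX1, hX2⟩ := hc
    rw [hX2]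
    calc eNorm (A X) ≤ C * frob X := hbdd X
      _ = C := by rw [hX1, mul_one]
  refine ⟨sSup s, Real.sSup_nonneg (fun c hc => ?_), rfl, fun X => ?_⟩
  · obtain ⟨X, _, hX2⟩ := hc
    rw [hX2]; exact eNorm_nonneg _
  · by_cases hfz : frob X = 0
    · have hX0 : X = 0 := by
        apply eq_zero_of_frob_sq; rw [hfz]; norm_num
      rw [hX0, map_zero]
      simp [eNorm, frob]
    · have hfpos : 0 < frob X := lt_of_le_of_ne (frob_nonneg X) (Ne.symm hfz)
      set X' := (frob X)⁻¹ • X with hX'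
      have hfX' : frob X' = 1 := by
        rw [hX', frob_smul, abs_of_nonneg (inv_nonneg.mpr (le_of_lt hfpos)),
          inv_mul_cancel₀ hfz]
      have hmem : eNorm (A X') ∈ s := ⟨X', hfX', rfl⟩
      have hle : eNorm (A X') ≤ sSup s := le_csSup hBddAbove hmem
      have hAX' : eNorm (A X') = (frob X)⁻¹ * eNorm (A X) := by
        rw [hX', _root_.map_smul, eNorm_smul, abs_of_nonneg (inv_nonneg.mpr (le_of_lt hfpos))]
      rw [hAX'] at hle
      calc eNorm (A X) = frob X * ((frob X)⁻¹ * eNorm (A X)) := by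
            field_simp
        _ ≤ frob X * sSup s := mul_le_mul_of_nonneg_left hle (le_of_lt hfpos)
        _ = sSup s * frob X := mul_comm _ _
end OpNorm

/-- Uzawa/SVT iteration with linear equality constraints. With `A` linear,
`A*` its adjoint, `‖A‖₂ = sup{‖A(X)‖ : ‖X‖_F = 1}`, a nonempty feasible set, strong
duality, and step sizes `0 < inf δ_k ≤ sup δ_k < 2/‖A‖₂²`, the iterates
`X^k = D_τ(A*(y^{k-1}))` (characterized as the prox minimizer),
`y^k = y^{k-1} + δ_k(b - A(X^k))` from `y⁰ = 0` converge to the unique solution of: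
minimize `τ‖X‖_* + (1/2)‖X‖_F²` subject to `A(X) = b`. -/
theorem uzawa_linear_convergence (n₁ n₂ m : ℕ) (τ : ℝ) (hτ : 0 < τ)
    (A : Matrix (Fin n₁) (Fin n₂) ℝ →ₗ[ℝ] (Fin m → ℝ))
    (Astar : (Fin m → ℝ) →ₗ[ℝ] Matrix (Fin n₁) (Fin n₂) ℝ)
    (hadj : ∀ (y : Fin m → ℝ) (X : Matrix (Fin n₁) (Fin n₂) ℝ),
      mInner (Astar y) X = eInner y (A X))
    (b : Fin m → ℝ) (hfeas : ∃ X, A X = b)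
    (nA : ℝ) (hnA : nA = sSup {c : ℝ | ∃ X, frob X = 1 ∧ c = eNorm (A X)})
    (hsaddle : ∃ (Xs : Matrix (Fin n₁) (Fin n₂) ℝ) (ys : Fin m → ℝ),
      (∀ X', ftau τ Xs + eInner ys (b - A Xs) ≤ ftau τ X' + eInner ys (b - A X')) ∧
      (∀ y', ftau τ Xs + eInner y' (b - A Xs) ≤ ftau τ Xs + eInner ys (b - A Xs)))
    (δ : ℕ → ℝ)
    (hδ : ∃ a c : ℝ, 0 < a ∧ c < 2 / nA ^ 2 ∧ ∀ k, a ≤ δ k ∧ δ k ≤ c)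
    (X : ℕ → Matrix (Fin n₁) (Fin n₂) ℝ) (y : ℕ → Fin m → ℝ)
    (hy0 : y 0 = 0)
    (hX : ∀ k, IsMinOn
      (fun Z => τ * nuclearNorm Z + (1 / 2) * frob (Z - Astar (y k)) ^ 2)
      Set.univ (X (k + 1)))
    (hy : ∀ k, y (k + 1) = y k + δ (k + 1) • (b - A (X (k + 1)))) :
    ∃ Xopt : Matrix (Fin n₁) (Fin n₂) ℝ,
      A Xopt = b ∧
      (∀ Z, A Z = b → ftau τ Xopt ≤ ftau τ Z) ∧
      (∀ Z, A Z = b → ftau τ Z = ftau τ Xopt → Z = Xopt) ∧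
      Tendsto (fun k => X k) atTop (nhds Xopt) := by
    classical
  obtain ⟨a, c, ha, hc, hδk⟩ := hδ
  obtain ⟨nA', hnA'0, hnA'eq, hop⟩ := op_bound A
  have hnAeq : nA = nA' := by rw [hnA, hnA'eq]
  have hnA0 : 0 ≤ nA := hnAeq ▸ hnA'0
  have hop' : ∀ Z, eNorm (A Z) ≤ nA * frob Z := by rw [hnAeq]; exact hop
  by_cases hnAz : nA = 0
  · exfalso
    rw [hnAz] at hc
    norm_num at hc
    linarith [(hδk 0).1, (hδk 0).2]
  have hnApos : 0 < nA := lt_of_le_of_ne hnA0 (Ne.symm hnAz)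
  obtain ⟨Xs, ys, hs1, hs2⟩ := hsaddle
  -- Step A : A Xs = b
  have hAXs : A Xs = b := by
    have h := hs2 (ys + (b - A Xs))
    have hsum : eInner (ys + (b - A Xs)) (b - A Xs)
        = eInner ys (b - A Xs) + eInner (b - A Xs) (b - A Xs) := by
      simp [eInner, add_mul, Finset.sum_add_distrib, Pi.add_apply]
    have hin : eInner (b - A Xs) (b - A Xs) ≤ 0 := by linarith
    have h0 : b - A Xs = 0 := eq_zero_of_dot_self _ hin
    have := sub_eq_zero.mp h0
    exact this.symm
  -- Step B : optimality among feasible points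
  have hminZ : ∀ Z, A Z = b → ftau τ Xs ≤ ftau τ Z := by
    intro Z hZ
    have h := hs1 Z
    rw [hAXs, hZ] at h
    simpa [eInner, sub_self] using h
  -- Step C : Xs minimizes the prox objective at Ws := Astar ys
  set Ws := Astar ys with hWs
  have hL : ∀ Z, ftau τ Z + eInner ys (b - A Z)
      = (τ * nuclearNorm Z + (1/2) * frob (Z - Ws)^2)
        + (eInner ys b - (1/2) * frob Ws^2) := by
    intro Z
    have h1 : eInner ys (b - A Z) = eInner ys b - mInner Ws Z := by
      have hsub : eInner ys (b - A Z) = eInner ys b - eInner ys (A Z) := by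
        simp [eInner, Pi.sub_apply, mul_sub, Finset.sum_sub_distrib]
      rw [hsub, ← hadj ys Z]
    have h2 : frob (Z - Ws)^2 = frob Z^2 - 2*mInner Ws Z + frob Ws^2 := frob_sq_sub _ _
    simp only [ftau]
    linear_combination h1 - (1/2) * h2
  have hXsProx : ∀ Z, τ * nuclearNorm Xs + (1/2) * frob (Xs - Ws)^2
      ≤ τ * nuclearNorm Z + (1/2) * frob (Z - Ws)^2 := by
    intro Z
    have h := hs1 Z
    rw [hL Xs, hL Z] at h
    linarith
  -- prox property of the iterates
  have hkprox : ∀ k Z, τ * nuclearNorm (X (k+1)) + (1/2) * frob (X (k+1) - Astar (y k))^2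
      ≤ τ * nuclearNorm Z + (1/2) * frob (Z - Astar (y k))^2 := by
    intro k Z
    exact (hX k) (Set.mem_univ Z)
  -- key inequality
  have key_k : ∀ k, frob (X (k+1) - Xs)^2 ≤ (y k - ys) ⬝ᵥ (A (X (k+1) - Xs)) := by
    intro k
    have h := prox_mono τ (le_of_lt hτ) (Astar (y k)) Ws (X (k+1)) Xs (hkprox k) hXsProx
    have hAs : Astar (y k) - Ws = Astar (y k - ys) := by rw [hWs, ← map_sub]
    rw [hAs, mInner_comm, hadj] at h
    exact h
  -- Lyapunov sequence
  set φ : ℕ → ℝ := fun k => (y k - ys) ⬝ᵥ (y k - ys) with hφdef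
  have hφ0 : ∀ k, 0 ≤ φ k := fun k => dot_self_nonneg _
  have hcnA : c * nA^2 < 2 := by
    rw [lt_div_iff₀ (pow_pos hnApos 2)] at hc
    exact hc
  set β := a * (2 - c * nA^2) with hβdef
  have hβ : 0 < β := mul_pos ha (by linarith)
  have hφrec : ∀ k, φ (k+1) ≤ φ k - β * frob (X (k+1) - Xs)^2 := by
    intro k
    set δ' := δ (k+1) with hδ'
    have hδa : a ≤ δ' := (hδk (k+1)).1
    have hδc : δ' ≤ c := (hδk (k+1)).2
    have hδpos : 0 < δ' := lt_of_lt_of_le ha hδa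
    set e := X (k+1) - Xs with he
    set Ae := A e with hAe
    set d := y k - ys with hd
    have hbA : b - A (X (k+1)) = -Ae := by
      rw [hAe, he, map_sub, hAXs]
      ext i
      simp [Pi.sub_apply, Pi.neg_apply]
    have hyk : y (k+1) - ys = d - δ' • Ae := by
      rw [hy k, hbA, hd]
      ext i
      simp [Pi.sub_apply, Pi.add_apply, Pi.smul_apply, smul_eq_mul]
      ring
    have hexp : φ (k+1) = φ k - 2*δ'*(d ⬝ᵥ Ae) + δ'^2*(Ae ⬝ᵥ Ae) := by
      simp only [hφdef]
      rw [hyk, ← hd]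
      simp only [sub_dotProduct, dotProduct_sub, smul_dotProduct, dotProduct_smul, smul_eq_mul,
        dotProduct_comm Ae d]
      ring
    have hS : frob e ^ 2 ≤ d ⬝ᵥ Ae := key_k k
    have hAeAe : Ae ⬝ᵥ Ae ≤ nA^2 * frob e^2 := by
      have h1 : eNorm Ae ^ 2 ≤ (nA * frob e)^2 :=
        pow_le_pow_left₀ (eNorm_nonneg _) (hop' e) 2
      rw [eNorm_sq] at h1
      calc Ae ⬝ᵥ Ae ≤ (nA * frob e)^2 := h1
        _ = nA^2 * frob e^2 := by ring
    have hFnn : 0 ≤ frob e ^ 2 := sq_nonneg _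
    have h1 : δ' * frob e^2 ≤ δ' * (d ⬝ᵥ Ae) := mul_le_mul_of_nonneg_left hS hδpos.le
    have h2 : δ'^2 * (Ae ⬝ᵥ Ae) ≤ δ'^2 * (nA^2 * frob e^2) :=
      mul_le_mul_of_nonneg_left hAeAe (sq_nonneg _)
    have h3 : δ' * (δ' * (nA^2 * frob e^2)) ≤ δ' * (c * (nA^2 * frob e^2)) :=
      mul_le_mul_of_nonneg_left
        (mul_le_mul_of_nonneg_right hδc (by positivity)) hδpos.le
    have h4 : a * ((2 - c*nA^2) * frob e^2) ≤ δ' * ((2 - c*nA^2) * frob e^2) :=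
      mul_le_mul_of_nonneg_right hδa (mul_nonneg (by linarith) hFnn)
    rw [hexp, hβdef]
    nlinarith [h1, h2, h3, h4]
  have hφanti : ∀ k, φ (k+1) ≤ φ k := by
    intro k
    have := hφrec k
    nlinarith [mul_nonneg hβ.le (sq_nonneg (frob (X (k+1) - Xs)))]
  -- convergence of φ
  have hmono : Antitone φ := antitone_nat_of_succ_le hφanti
  have hbddB : BddBelow (Set.range φ) := ⟨0, fun x hx => by
    obtain ⟨k, hk⟩ := hx
    exact hk ▸ hφ0 k⟩
  have hφlim : Tendsto φ atTop (nhds (⨅ k, φ k)) := tendsto_atTop_ciInf hmono hbddB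
  have hφlim' : Tendsto (fun k => φ (k+1)) atTop (nhds (⨅ k, φ k)) :=
    hφlim.comp (tendsto_add_atTop_nat 1)
  have hdiff : Tendsto (fun k => φ k - φ (k+1)) atTop (nhds 0) := by
    have := hφlim.sub hφlim'
    simpa using this
  have hFle : ∀ k, frob (X (k+1) - Xs)^2 ≤ (φ k - φ (k+1)) / β := by
    intro k
    rw [le_div_iff₀ hβ]
    have := hφrec k
    nlinarith
  have hFlim : Tendsto (fun k => frob (X (k+1) - Xs)^2) atTop (nhds 0) := by
    apply squeeze_zero (fun k => sq_nonneg _) hFle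
    have := hdiff.div_const β
    simpa using this
  -- entrywise convergence
  have hentry : ∀ (i : Fin n₁) (j : Fin n₂),
      Tendsto (fun k => X (k+1) i j) atTop (nhds (Xs i j)) := by
    intro i j
    have hsq : Tendsto (fun k => (X (k+1) i j - Xs i j)^2) atTop (nhds 0) := by
      apply squeeze_zero (fun k => sq_nonneg _) (fun k => ?_) hFlim
      have := entry_sq_le_frob_sq (X (k+1) - Xs) i j
      simpa [Matrix.sub_apply] using this
    have habs : Tendsto (fun k => |X (k+1) i j - Xs i j|) atTop (nhds 0) := by
      have h := (Real.continuous_sqrt.tendsto 0).comp hsq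
      simpa [Function.comp_def, Real.sqrt_sq_eq_abs] using h
    have hzero : Tendsto (fun k => X (k+1) i j - Xs i j) atTop (nhds 0) := by
      have hneg : Tendsto (fun k => -|X (k+1) i j - Xs i j|) atTop (nhds 0) := by
        simpa using habs.neg
      exact tendsto_of_tendsto_of_tendsto_of_le_of_le hneg habs
        (fun k => neg_abs_le _) (fun k => le_abs_self _)
    have := hzero.add_const (Xs i j)
    simpa using this
  have hmat : Tendsto (fun k => X (k+1)) atTop (nhds Xs) := by
    refine tendsto_pi_nhds.mpr ?_
    intro i
    rw [tendsto_pi_nhds]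
    intro j
    exact hentry i j
  have hfinal : Tendsto (fun k => X k) atTop (nhds Xs) :=
    (tendsto_add_atTop_iff_nat 1).mp hmat
  -- uniqueness
  have huniq : ∀ Z, A Z = b → ftau τ Z = ftau τ Xs → Z = Xs := by
    intro Z hZb hZf
    have hZprox : ∀ Z', τ * nuclearNorm Z + (1/2) * frob (Z - Ws)^2
        ≤ τ * nuclearNorm Z' + (1/2) * frob (Z' - Ws)^2 := by
      intro Z'
      have h := hs1 Z'
      rw [hL Z'] at h
      have hLZ := hL Z
      rw [hZb] at hLZ
      simp only [sub_self] at hLZ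
      have hez : eInner ys (0 : Fin m → ℝ) = 0 := by simp [eInner]
      rw [hez] at hLZ
      have hLXs := hAXs
      rw [hAXs] at h
      simp only [sub_self] at h
      rw [hez] at h
      -- h : ftau τ Xs ≤ g Z' + K ; hLZ : ftau τ Z + 0 = g Z + K
      linarith [hZf, hLZ, h]
    have h := prox_mono τ (le_of_lt hτ) Ws Ws Z Xs hZprox hXsProx
    have hzero : mInner (Z - Xs) (Ws - Ws) = 0 := mInner_zero_right _ _
    rw [hzero] at h
    have : Z - Xs = 0 := eq_zero_of_frob_sq _ h
    exact sub_eq_zero.mp this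
  exact ⟨Xs, hAXs, hminZ, huniq, hfinal⟩
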